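/- Let t ≥ 2 and suppose the probability measure P on L^ℕ satisfies the CSPR for words of length at most t: for all m < t, all (l_0,…,l_m) ∈ L^{m+1} and all u ≥ 0, P(Y_{k+u} = l_k, k = 0,…,m) = P(Y_{k+u} = φ(l_{m-k}), k = 0,…,m). Then P is stationary on cylinders of length at most t − 1: for all m < t − 1, all (l_0,…,l_m) ∈ L^{m+1} and all u ≥ 1, P(Y_{k+u} = l_k, k = 0,…,m) = P(Y_k = l_k, k = 0,…,m). -/
import Mathlib


open MeasureTheory

lemma meas_cyl {L : Type*} [MeasurableSpace L] [MeasurableSingletonClass L]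
    (u m : ℕ) (w : ℕ → L) :
    MeasurableSet {y : ℕ → L | ∀ k ≤ m, y (k + u) = w k} := by
  have h : {y : ℕ → L | ∀ k ≤ m, y (k + u) = w k}
      = ⋂ k ∈ Set.Iic m, (fun y : ℕ → L => y (k + u)) ⁻¹' {w k} := by
    ext y; simp
  rw [h]
  exact MeasurableSet.biInter (Set.to_countable _)
    (fun k _ => (measurable_pi_apply _) (measurableSet_singleton _))

lemma decomp {L : Type*} [Fintype L] [MeasurableSpace L] [MeasurableSingletonClass L]
    (P : Measure (ℕ → L)) (S : Set (ℕ → L)) (hS : MeasurableSet S) (i : ℕ) :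
    P S = ∑ l : L, P (S ∩ {y | y i = l}) := by
  have h1 : S = ⋃ l : L, S ∩ {y | y i = l} := by
    ext y; simp
  have hd : Pairwise (Function.onFun Disjoint (fun l : L => S ∩ {y | y i = l})) := by
    intro a b hab
    refine Set.disjoint_left.2 ?_
    rintro y ⟨-, ha⟩ ⟨-, hb⟩
    exact hab (ha.symm.trans hb)
  have hm : ∀ l : L, MeasurableSet (S ∩ {y : ℕ → L | y i = l}) := by
    intro l
    have : {y : ℕ → L | y i = l} = (fun y : ℕ → L => y i) ⁻¹' {l} := by ext; simp
    rw [this]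
    exact hS.inter ((measurable_pi_apply i) (measurableSet_singleton l))
  calc P S = P (⋃ l : L, S ∩ {y | y i = l}) := by rw [← h1]
    _ = ∑' l : L, P (S ∩ {y | y i = l}) := measure_iUnion hd hm
    _ = ∑ l : L, P (S ∩ {y | y i = l}) := tsum_fintype _

/-- one step shift invariance -/
lemma step_shift {L : Type*} [Fintype L] [MeasurableSpace L] [MeasurableSingletonClass L]
    (φ : L → L) (hφ : Function.Involutive φ)
    (P : Measure (ℕ → L))
    (t : ℕ)
    (hcspr : ∀ m : ℕ, m < t → ∀ (u : ℕ) (w : ℕ → L),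
      P {y | ∀ k ≤ m, y (k + u) = w k} = P {y | ∀ k ≤ m, y (k + u) = φ (w (m - k))})
    (m : ℕ) (hm : m + 1 < t) (u : ℕ) (w : ℕ → L) :
    P {y | ∀ k ≤ m, y (k + (u + 1)) = w k} = P {y | ∀ k ≤ m, y (k + u) = w k} := by
  have hm' : m < t := Nat.lt_of_succ_lt hm
  -- word extended by l at the front
  set w' : L → ℕ → L := fun l k => if k = 0 then l else w (k - 1) with hw'
  set C : Set (ℕ → L) := {y | ∀ k ≤ m, y (k + u) = φ (w (m - k))} with hC
  have key1 : ∀ l : L,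
      {y : ℕ → L | ∀ k ≤ m, y (k + (u + 1)) = w k} ∩ {y | y u = l}
        = {y : ℕ → L | ∀ k ≤ m + 1, y (k + u) = w' l k} := by
    intro l
    ext y
    simp only [Set.mem_inter_iff, Set.mem_setOf_eq, hw']
    constructor
    · rintro ⟨h1, h2⟩ k hk
      rcases k with _ | j
      · simpa using h2
      · have hj : j ≤ m := Nat.lt_succ_iff.mp hk
        simp only [Nat.succ_ne_zero, if_false, Nat.succ_sub_one]
        have heq : j + 1 + u = j + (u + 1) := by omega
        rw [heq]
        exact h1 j hj
    · intro h
      constructor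
      · intro k hk
        have h2 := h (k + 1) (by omega)
        have heq : k + 1 + u = k + (u + 1) := by omega
        rw [heq] at h2
        simpa using h2
      · simpa using h 0 (by omega)
  have key2 : ∀ l : L,
      {y : ℕ → L | ∀ k ≤ m + 1, y (k + u) = φ (w' l (m + 1 - k))}
        = C ∩ {y | y (m + 1 + u) = φ l} := by
    intro l
    ext y
    simp only [Set.mem_inter_iff, Set.mem_setOf_eq, hw', hC]
    constructor
    · intro h
      constructor
      · intro k hk
        have h2 := h k (by omega)
        have hne : m + 1 - k ≠ 0 := by omega
        rw [if_neg hne] at h2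
        have : m + 1 - k - 1 = m - k := by omega
        rwa [this] at h2
      · have h2 := h (m + 1) le_rfl
        simpa using h2
    · rintro ⟨h1, h2⟩ k hk
      rcases Nat.lt_or_ge k (m + 1) with hlt | hge
      · have hk' : k ≤ m := by omega
        have hne : m + 1 - k ≠ 0 := by omega
        rw [if_neg hne]
        have : m + 1 - k - 1 = m - k := by omega
        rw [this]
        exact h1 k hk'
      · have : k = m + 1 := by omega
        subst this
        simpa using h2
  have key3 : P C = P {y : ℕ → L | ∀ k ≤ m, y (k + u) = w k} := by
    have := hcspr m hm' u (fun k => φ (w (m - k)))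
    rw [← hC] at this
    rw [this]
    congr 1
    ext y
    simp only [Set.mem_setOf_eq]
    constructor
    · intro h k hk
      have h2 := h k hk
      rwa [Nat.sub_sub_self hk, hφ] at h2
    · intro h k hk
      rw [Nat.sub_sub_self hk, hφ]
      exact h k hk
  calc P {y : ℕ → L | ∀ k ≤ m, y (k + (u + 1)) = w k}
      = ∑ l : L, P ({y : ℕ → L | ∀ k ≤ m, y (k + (u + 1)) = w k} ∩ {y | y u = l}) :=
        decomp P _ (meas_cyl (u + 1) m w) u
    _ = ∑ l : L, P {y : ℕ → L | ∀ k ≤ m + 1, y (k + u) = w' l k} := by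
        simp_rw [key1]
    _ = ∑ l : L, P {y : ℕ → L | ∀ k ≤ m + 1, y (k + u) = φ (w' l (m + 1 - k))} := by
        refine Finset.sum_congr rfl fun l _ => ?_
        exact hcspr (m + 1) hm u (w' l)
    _ = ∑ l : L, P (C ∩ {y | y (m + 1 + u) = φ l}) := by simp_rw [key2]
    _ = ∑ l : L, P (C ∩ {y | y (m + 1 + u) = l}) :=
        Equiv.sum_comp (Function.Involutive.toPerm φ hφ)
          (fun l => P (C ∩ {y | y (m + 1 + u) = l}))
    _ = P C := (decomp P C (meas_cyl u m _) (m + 1 + u)).symm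
    _ = P {y : ℕ → L | ∀ k ≤ m, y (k + u) = w k} := key3

theorem stmt_14 {L : Type*} [Fintype L] [MeasurableSpace L] [MeasurableSingletonClass L]
    (φ : L → L) (hφ : Function.Involutive φ)
    (P : Measure (ℕ → L)) [IsProbabilityMeasure P]
    (t : ℕ) (ht : 2 ≤ t)
    (hcspr : ∀ m : ℕ, m < t → ∀ (u : ℕ) (w : ℕ → L),
      P {y | ∀ k ≤ m, y (k + u) = w k} = P {y | ∀ k ≤ m, y (k + u) = φ (w (m - k))}) :
    ∀ m : ℕ, m < t - 1 → ∀ u : ℕ, 1 ≤ u → ∀ w : ℕ → L,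
      P {y | ∀ k ≤ m, y (k + u) = w k} = P {y | ∀ k ≤ m, y k = w k} := by
  intro m hm u hu w
  have hm1 : m + 1 < t := by omega
  have main : ∀ v : ℕ, P {y | ∀ k ≤ m, y (k + v) = w k} = P {y | ∀ k ≤ m, y k = w k} := by
    intro v
    induction v with
    | zero => simp
    | succ n ih => rw [step_shift φ hφ P t hcspr m hm1 n w]; exact ih
  exact main u
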